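/- Let R ⊆ [n]² with |R| ≤ Cn, and suppose that a uniformly random permutation π ∈ S_n avoids R (i.e., (i, π(i)) ∉ R for all i ∈ [n]) with probability at least γ > 0. If n ≥ 8C/γ + 2, then for all i, j ∈ [n], the conditional probability that π avoids R \ {(i,j)} given π(i) = j is at least γ/2. -/

import Mathlib

open Finset Equiv

lemma fix_two_key {n : ℕ} (a i : Fin n) (π : Equiv.Perm (Fin n)) (h : π a = a ∧ π i = i) :
    ∀ x, (x ≠ a ∧ x ≠ i) ↔ (π x ≠ a ∧ π x ≠ i) := by
  intro x
  constructor
  · rintro ⟨h1, h2⟩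
    exact ⟨fun hh => h1 (π.injective (hh.trans h.1.symm)),
           fun hh => h2 (π.injective (hh.trans h.2.symm))⟩
  · rintro ⟨h1, h2⟩
    refine ⟨fun hh => h1 ?_, fun hh => h2 ?_⟩
    · rw [hh, h.1]
    · rw [hh, h.2]

lemma fix_two_count {n : ℕ} (a i : Fin n) (hai : a ≠ i) :
    (univ.filter fun π : Equiv.Perm (Fin n) => π a = a ∧ π i = i).card ≤ (n - 2).factorial := by
  classical
  have hcard : Fintype.card {x : Fin n // x ≠ a ∧ x ≠ i} = n - 2 := by
    rw [Fintype.card_subtype]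
    have : (univ.filter fun x : Fin n => x ≠ a ∧ x ≠ i) = univ \ {a, i} := by
      ext x
      simp [not_or]
    rw [this, card_sdiff_of_subset (subset_univ _), card_univ, Fintype.card_fin,
      card_insert_of_notMem (by simpa using hai), card_singleton]
  calc (univ.filter fun π : Equiv.Perm (Fin n) => π a = a ∧ π i = i).card
      ≤ (univ : Finset (Equiv.Perm {x : Fin n // x ≠ a ∧ x ≠ i})).card := by
        apply Finset.card_le_card_of_injOn
          (fun π => if h : π a = a ∧ π i = i then π.subtypePerm (fun x => (fix_two_key a i π h x).symm) else 1)
        · intro π hπ; exact mem_univ _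
        · intro π hπ π' hπ' heq
          simp only [mem_coe, mem_filter, mem_univ, true_and] at hπ hπ'
          simp only [dif_pos hπ, dif_pos hπ'] at heq
          ext x
          by_cases hx : x ≠ a ∧ x ≠ i
          · have := congrArg (fun f => ((f : Equiv.Perm {x : Fin n // x ≠ a ∧ x ≠ i}) ⟨x, hx⟩ :
              {x : Fin n // x ≠ a ∧ x ≠ i}).1) heq
            exact congrArg Fin.val (by simpa using this)
          · simp only [not_and_or, not_not] at hx
            rcases hx with rfl | rfl
            · exact congrArg Fin.val (hπ.1.trans hπ'.1.symm)
            · exact congrArg Fin.val (hπ.2.trans hπ'.2.symm)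
    _ ≤ (n - 2).factorial := by
        rw [card_univ, Fintype.card_perm, hcard]
open Finset Equiv

lemma two_point_count' {n : ℕ} (i j a b : Fin n) (hai : a ≠ i) (hbj : b ≠ j) :
    (univ.filter fun π : Equiv.Perm (Fin n) => π a = j ∧ π i = b).card ≤
      (univ.filter fun π : Equiv.Perm (Fin n) => π a = a ∧ π i = i).card := by
  classical
  set b' : Fin n := Equiv.swap j a b with hb'
  have hb'a : b' ≠ a := by
    simp only [hb', Ne, Equiv.swap_apply_eq_iff, Equiv.swap_apply_right]
    exact hbj
  set τ : Equiv.Perm (Fin n) := Equiv.swap b' i * Equiv.swap j a with hτ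
  have hτj : τ j = a := by
    simp only [hτ, Equiv.Perm.mul_apply, Equiv.swap_apply_left]
    exact Equiv.swap_apply_of_ne_of_ne hb'a.symm hai
  have hτb : τ b = i := by
    simp only [hτ, Equiv.Perm.mul_apply, ← hb', Equiv.swap_apply_left]
  apply Finset.card_le_card_of_injOn (fun π => τ * π)
  · intro π hπ
    simp only [mem_coe, mem_filter, mem_univ, true_and] at hπ ⊢
    constructor
    · rw [Equiv.Perm.mul_apply, hπ.1, hτj]
    · rw [Equiv.Perm.mul_apply, hπ.2, hτb]
  · intro π _ π' _ heq
    exact mul_left_cancel heq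
open Finset Equiv

lemma two_point_count {n : ℕ} (i j a b : Fin n) (hab : (a, b) ≠ (i, j)) :
    (univ.filter fun π : Equiv.Perm (Fin n) => π a = j ∧ π i = b).card ≤
      (n - 2).factorial := by
  classical
  rcases (univ.filter fun π : Equiv.Perm (Fin n) => π a = j ∧ π i = b).eq_empty_or_nonempty
    with he | ⟨π₀, hπ₀⟩
  · rw [he]; simp [Nat.factorial_pos]
  · simp only [mem_filter, mem_univ, true_and] at hπ₀
    have hai : a ≠ i := by
      rintro rfl
      exact hab (by rw [Prod.mk.injEq]; exact ⟨rfl, hπ₀.2.symm.trans hπ₀.1⟩)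
    have hbj : b ≠ j := by
      rintro rfl
      exact hai (π₀.injective (hπ₀.2.trans hπ₀.1.symm)).symm
    exact (two_point_count' i j a b hai hbj).trans (fix_two_count a i hai)

theorem stmt6 (n : ℕ) (C γ : ℝ) (hC : 0 < C) (hγ : 0 < γ)
    (R : Finset (Fin n × Fin n)) (hR : (R.card : ℝ) ≤ C * n)
    (havoid : γ ≤
      ((Finset.univ.filter fun π : Equiv.Perm (Fin n) => ∀ k, (k, π k) ∉ R).card : ℝ)
        / (n.factorial : ℝ))
    (hn : 8 * C / γ + 2 ≤ (n : ℝ)) (i j : Fin n) :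
    γ / 2 ≤
      ((Finset.univ.filter fun π : Equiv.Perm (Fin n) =>
          π i = j ∧ ∀ k, (k, π k) ∉ R.erase (i, j)).card : ℝ)
        / ((n - 1).factorial : ℝ) := by
  classical
  set A : Finset (Equiv.Perm (Fin n)) :=
    univ.filter fun π => ∀ k, (k, π k) ∉ R with hA
  set G : Finset (Equiv.Perm (Fin n)) :=
    univ.filter fun π => π i = j ∧ ∀ k, (k, π k) ∉ R.erase (i, j) with hG
  set B : Finset (Equiv.Perm (Fin n)) :=
    A.filter fun π => (π.symm j, π i) ∈ R.erase (i, j) with hB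
  -- n ≥ 3
  have hn3 : (3 : ℝ) ≤ n := by
    have h1 : (0:ℝ) < 8 * C / γ := by positivity
    have : (2:ℝ) < n := by linarith
    exact_mod_cast Nat.succ_le_of_lt (by exact_mod_cast this)
  have hn3' : 3 ≤ n := by exact_mod_cast hn3
  -- Step 1: |A \ B| ≤ |G| * n
  have step1 : (A \ B).card ≤ G.card * n := by
    have : (A \ B).card ≤ (G ×ˢ (univ : Finset (Fin n))).card := by
      apply Finset.card_le_card_of_injOn
        (fun π => (π * Equiv.swap i (π.symm j), π.symm j))
      · intro π hπ
        simp only [mem_coe, mem_sdiff, hA, hB, mem_filter, mem_univ, true_and, not_and] at hπ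
        obtain ⟨hπA, hπB⟩ := hπ
        have hπB' := hπB hπA
        simp only [mem_coe, mem_product, mem_univ, and_true, hG, mem_filter, true_and]
        set a : Fin n := π.symm j with ha
        constructor
        · simp [Equiv.Perm.mul_apply, Equiv.swap_apply_left, ha]
        · intro k
          rcases eq_or_ne k i with rfl | hki
          · simp only [Equiv.Perm.mul_apply, Equiv.swap_apply_left, ha,
              Equiv.apply_symm_apply]
            exact Finset.notMem_erase _ _
          · rcases eq_or_ne k a with rfl | hka
            · simpa [Equiv.Perm.mul_apply, Equiv.swap_apply_right] using hπB'
            · have : Equiv.swap i a k = k := Equiv.swap_apply_of_ne_of_ne hki hka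
              simp only [Equiv.Perm.mul_apply, this]
              exact fun hmem => hπA k (Finset.mem_of_mem_erase hmem)
      · intro π hπ π' hπ' heq
        simp only [Prod.mk.injEq] at heq
        have h2 := heq.2
        rw [h2] at heq
        exact mul_right_cancel heq.1
    rwa [Finset.card_product, card_univ, Fintype.card_fin] at this
  -- Step 2: |B| ≤ |R| * (n-2)!
  have step2 : B.card ≤ R.card * (n - 2).factorial := by
    have hsub : B ⊆ (R.erase (i, j)).biUnion
        (fun ab => univ.filter fun π : Equiv.Perm (Fin n) => π ab.1 = j ∧ π i = ab.2) := by
      intro π hπ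
      simp only [hB, mem_filter] at hπ
      rw [Finset.mem_biUnion]
      exact ⟨(π.symm j, π i), hπ.2, by simp⟩
    calc B.card ≤ _ := Finset.card_le_card hsub
      _ ≤ ∑ ab ∈ R.erase (i, j),
          (univ.filter fun π : Equiv.Perm (Fin n) => π ab.1 = j ∧ π i = ab.2).card :=
        Finset.card_biUnion_le
      _ ≤ ∑ _ab ∈ R.erase (i, j), (n - 2).factorial := by
        apply Finset.sum_le_sum
        intro ab hab
        exact two_point_count i j ab.1 ab.2 (by
          intro h
          exact (Finset.ne_of_mem_erase hab) (by rw [← h]))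
      _ = (R.erase (i, j)).card * (n - 2).factorial := by rw [Finset.sum_const, smul_eq_mul]
      _ ≤ R.card * (n - 2).factorial :=
        Nat.mul_le_mul_right _ (Finset.card_le_card (Finset.erase_subset _ _))
  -- combine: |A| = |A\B| + |B|
  have hBA : B ⊆ A := Finset.filter_subset _ _
  have hsplit : A.card = (A \ B).card + B.card := by
    rw [Finset.card_sdiff_add_card_eq_card hBA]
  have hcount : A.card ≤ G.card * n + R.card * (n - 2).factorial := by
    rw [hsplit]; exact Nat.add_le_add step1 step2
  -- real arithmetic
  have hfac_pos : (0:ℝ) < (n.factorial : ℝ) := by exact_mod_cast n.factorial_pos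
  have hfac1_pos : (0:ℝ) < ((n-1).factorial : ℝ) := by exact_mod_cast (n-1).factorial_pos
  have hAc : γ * (n.factorial : ℝ) ≤ A.card := by
    rw [← le_div_iff₀ hfac_pos]; exact havoid
  have hfact1 : (n.factorial : ℝ) = n * ((n-1).factorial : ℝ) := by
    have := Nat.mul_factorial_pred (show n ≠ 0 by omega)
    exact_mod_cast this.symm
  have hfact2 : (((n-1).factorial : ℕ) : ℝ) = ((n:ℝ) - 1) * ((n-2).factorial : ℝ) := by
    have h1 : (n - 1 - 1) = n - 2 := by omega
    have := Nat.mul_factorial_pred (show n - 1 ≠ 0 by omega)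
    rw [h1] at this
    have hcast : ((n - 1 : ℕ) : ℝ) = (n:ℝ) - 1 := by
      have : (1:ℕ) ≤ n := by omega
      push_cast [Nat.cast_sub this]
      ring
    calc (((n-1).factorial : ℕ) : ℝ) = (((n-1) * (n-2).factorial : ℕ) : ℝ) := by
          exact_mod_cast this.symm
      _ = ((n:ℝ) - 1) * ((n-2).factorial : ℝ) := by push_cast [hcast]; ring
  have hcount' : (A.card : ℝ) ≤ (G.card : ℝ) * n + (R.card : ℝ) * ((n-2).factorial : ℝ) := by
    exact_mod_cast hcount
  have hnpos : (0:ℝ) < n := by linarith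
  have hRn : (R.card : ℝ) * ((n-2).factorial : ℝ) ≤ C * n * ((n-2).factorial : ℝ) := by
    apply mul_le_mul_of_nonneg_right hR (by positivity)
  -- γ * n * (n-1)! ≤ G*n + C*n*(n-2)!
  have key : γ * ((n:ℝ) * ((n-1).factorial : ℝ)) ≤
      (G.card : ℝ) * n + C * n * ((n-2).factorial : ℝ) := by
    calc γ * ((n:ℝ) * ((n-1).factorial : ℝ)) = γ * (n.factorial : ℝ) := by rw [hfact1]
      _ ≤ (A.card : ℝ) := hAc
      _ ≤ (G.card : ℝ) * n + (R.card : ℝ) * ((n-2).factorial : ℝ) := hcount'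
      _ ≤ _ := by linarith
  have key2 : γ * ((n-1).factorial : ℝ) ≤ (G.card : ℝ) + C * ((n-2).factorial : ℝ) := by
    have h2 : (n:ℝ) * (γ * ((n-1).factorial : ℝ)) ≤
        (n:ℝ) * ((G.card : ℝ) + C * ((n-2).factorial : ℝ)) := by linarith [key]
    exact le_of_mul_le_mul_left h2 hnpos
  -- C*(n-2)! ≤ (γ/2)*(n-1)!
  have hfac2_pos : (0:ℝ) < ((n-2).factorial : ℝ) := by exact_mod_cast (n-2).factorial_pos
  have hC2 : C ≤ γ / 2 * ((n:ℝ) - 1) := by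
    have h8 : 8 * C / γ ≤ (n:ℝ) - 2 := by linarith
    have : 8 * C ≤ γ * ((n:ℝ) - 2) := by
      rw [div_le_iff₀ hγ] at h8; linarith
    nlinarith
  have hfinal : γ / 2 * ((n-1).factorial : ℝ) ≤ (G.card : ℝ) := by
    have : C * ((n-2).factorial : ℝ) ≤ γ / 2 * ((n-1).factorial : ℝ) := by
      rw [hfact2]
      calc C * ((n-2).factorial : ℝ) ≤ (γ / 2 * ((n:ℝ) - 1)) * ((n-2).factorial : ℝ) :=
            mul_le_mul_of_nonneg_right hC2 (le_of_lt hfac2_pos)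
        _ = γ / 2 * (((n:ℝ) - 1) * ((n-2).factorial : ℝ)) := by ring
    linarith [key2]
  rw [le_div_iff₀ hfac1_pos]
  exact hfinal
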